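/- Let a_0, a_1, a_2 be nonnegative integers with a_2 − a_1 ≤ a_0 ≤ a_1 + a_2, a_1 ≤ a_0 + a_2, and a_0 − a_1 + a_2 odd. Then the set of maximizers of d(r_1, r_2) = r_1(a_0 + a_1) + r_2(a_1 + a_2) − r_1² − r_2² − r_1 r_2 over {(r_1, r_2) ∈ ℤ_{≥0}² : r_1 ≤ a_0, r_2 ≤ a_2, r_1 + r_2 ≤ a_1} is exactly {((a_0 + a_1 − a_2 − 1)/2, (−a_0 + a_1 + a_2 + 1)/2), ((a_0 + a_1 − a_2 + 1)/2, (−a_0 + a_1 + a_2 − 1)/2)}, and both maximizers give the same value of d. -/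
import Mathlib


/-- The dimension of the variety of length-2 chain complexes with ranks `(r₁, r₂)`. -/
def d2 (a₀ a₁ a₂ : ℕ) (r : ℤ × ℤ) : ℤ :=
  r.1 * (a₀ + a₁) + r.2 * (a₁ + a₂) - r.1 ^ 2 - r.2 ^ 2 - r.1 * r.2

/-- Feasibility of the rank vector `(r₁, r₂)`. -/
def feas2 (a₀ a₁ a₂ : ℕ) (r : ℤ × ℤ) : Prop :=
  0 ≤ r.1 ∧ 0 ≤ r.2 ∧ r.1 ≤ a₀ ∧ r.2 ≤ a₂ ∧ r.1 + r.2 ≤ a₁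

/-- If `a₂ - a₁ ≤ a₀ ≤ a₁ + a₂`, `a₁ ≤ a₀ + a₂` and `a₀ - a₁ + a₂` is odd, then
the set of maximizers of `d2` over the feasible region is exactly the pair
`{((a₀+a₁-a₂-1)/2, (-a₀+a₁+a₂+1)/2), ((a₀+a₁-a₂+1)/2, (-a₀+a₁+a₂-1)/2)}`,
and both maximizers give the same value of `d2`. -/
theorem stmt8 (a₀ a₁ a₂ : ℕ) (h₁ : (a₂ : ℤ) - a₁ ≤ a₀) (h₂ : a₀ ≤ a₁ + a₂)
    (h₃ : a₁ ≤ a₀ + a₂) (h₄ : Odd ((a₀ : ℤ) - a₁ + a₂)) :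
    {r : ℤ × ℤ | feas2 a₀ a₁ a₂ r ∧
        ∀ s : ℤ × ℤ, feas2 a₀ a₁ a₂ s → d2 a₀ a₁ a₂ s ≤ d2 a₀ a₁ a₂ r} =
      {((((a₀ : ℤ) + a₁ - a₂ - 1) / 2, ((a₁ : ℤ) + a₂ - a₀ + 1) / 2) : ℤ × ℤ),
       (((a₀ : ℤ) + a₁ - a₂ + 1) / 2, ((a₁ : ℤ) + a₂ - a₀ - 1) / 2)} ∧
    d2 a₀ a₁ a₂ (((a₀ : ℤ) + a₁ - a₂ - 1) / 2, ((a₁ : ℤ) + a₂ - a₀ + 1) / 2) =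
      d2 a₀ a₁ a₂ (((a₀ : ℤ) + a₁ - a₂ + 1) / 2, ((a₁ : ℤ) + a₂ - a₀ - 1) / 2) := by
  obtain ⟨m, hm⟩ := h₄
  -- the key parameter k
  obtain ⟨k, hk⟩ : ∃ k : ℤ, (a₀ : ℤ) + a₁ - a₂ = 2 * k + 1 := ⟨m + a₁ - a₂, by omega⟩
  have e1 : ((a₀ : ℤ) + a₁ - a₂ - 1) / 2 = k := by omega
  have e2 : ((a₁ : ℤ) + a₂ - a₀ + 1) / 2 = a₁ - k := by omega
  have e3 : ((a₀ : ℤ) + a₁ - a₂ + 1) / 2 = k + 1 := by omega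
  have e4 : ((a₁ : ℤ) + a₂ - a₀ - 1) / 2 = a₁ - k - 1 := by omega
  have hA : (a₀ : ℤ) = 2 * k + 1 - a₁ + a₂ := by omega
  have hk0 : 0 ≤ k := by omega
  have hk1 : k + 1 ≤ (a₁ : ℤ) := by omega
  have hka0 : k + 1 ≤ (a₀ : ℤ) := by omega
  have hka2 : (a₁ : ℤ) - k ≤ a₂ := by omega
  rw [e1, e2, e3, e4]
  have key : ∀ s : ℤ × ℤ, feas2 a₀ a₁ a₂ s →
      d2 a₀ a₁ a₂ s ≤ d2 a₀ a₁ a₂ (k, a₁ - k) ∧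
      (d2 a₀ a₁ a₂ (k, a₁ - k) ≤ d2 a₀ a₁ a₂ s →
        s = (k, (a₁ : ℤ) - k) ∨ s = (k + 1, (a₁ : ℤ) - k - 1)) := by
    rintro ⟨x, y⟩ ⟨hx, hy, hxa, hya, hsum⟩
    simp only [feas2, d2] at *
    rcases eq_or_lt_of_le hsum with heq | hlt
    · have hy' : y = (a₁ : ℤ) - x := by omega
      subst hy'
      have hid : d2 a₀ a₁ a₂ (k, a₁ - k) - d2 a₀ a₁ a₂ (x, (a₁ : ℤ) - x)
          = (x - k) * (x - k - 1) := by
        simp only [d2]; rw [hA]; ring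
      have hprod : 0 ≤ (x - k) * (x - k - 1) := by
        rcases le_or_gt x k with h | h
        · nlinarith [mul_nonneg (show (0:ℤ) ≤ k - x by omega) (show (0:ℤ) ≤ k + 1 - x by omega)]
        · nlinarith [mul_nonneg (show (0:ℤ) ≤ x - k by omega) (show (0:ℤ) ≤ x - k - 1 by omega)]
      simp only [d2] at hid ⊢
      constructor
      · linarith
      · intro hle
        have h0 : (x - k) * (x - k - 1) = 0 := by linarith
        rcases mul_eq_zero.mp h0 with h | h
        · left
          obtain rfl : x = k := by omega
          rfl
        · right
          obtain rfl : x = k + 1 := by omega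
          exact Prod.ext_iff.mpr ⟨rfl, by ring⟩
    · have hstrict : d2 a₀ a₁ a₂ (x, y) < d2 a₀ a₁ a₂ (k, a₁ - k) := by
        simp only [d2]
        have hP : 0 ≤ ((a₁ : ℤ) - x - y - 1) * (3 * ((a₁ : ℤ) - x - y) + 2 * ((a₀ : ℤ) + a₂ - a₁)) :=
          mul_nonneg (by omega) (by omega)
        nlinarith [hP, sq_nonneg (x - y + (a₁ : ℤ) - 2 * k - 1)]
      simp only [d2] at hstrict
      exact ⟨le_of_lt hstrict, fun h => absurd h (not_le.mpr hstrict)⟩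
  have hval : d2 a₀ a₁ a₂ (k, (a₁ : ℤ) - k) = d2 a₀ a₁ a₂ (k + 1, (a₁ : ℤ) - k - 1) := by
    simp only [d2]; rw [hA]; ring
  have hfeas1 : feas2 a₀ a₁ a₂ (k, (a₁ : ℤ) - k) := ⟨hk0, by simp; omega, by simp; omega, by simp; omega, by simp⟩
  have hfeas2 : feas2 a₀ a₁ a₂ (k + 1, (a₁ : ℤ) - k - 1) := ⟨by simp; omega, by simp; omega, by simp; omega, by simp; omega, by simp⟩
  refine ⟨?_, hval⟩
  ext r
  simp only [Set.mem_setOf_eq, Set.mem_insert_iff, Set.mem_singleton_iff]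
  constructor
  · rintro ⟨hr, hmax⟩
    have h1 := (key r hr).2
    have h2 := hmax _ hfeas1
    rcases h1 h2 with h | h
    · left; exact h
    · right; exact h
  · rintro (rfl | rfl)
    · exact ⟨hfeas1, fun s hs => (key s hs).1⟩
    · refine ⟨hfeas2, fun s hs => ?_⟩
      rw [← hval]
      exact (key s hs).1
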